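/- arXiv:1710.05830 — 4 statements merged into one kernel-verified Lean document; each statement's English description precedes it below -/
import Mathlib

section
/- Let X be a geodesic metric space, E a closed subset of X, and φ(x) = d(x,E) the distance function to E. Define ψ = φ²/2 and the cost c(x,y) = d(x,y)²/2. Then ψ is c-concave, i.e. ψ^{cc} = ψ, where ψ^c(y) = inf_{x∈X}[d(x,y)²/2 − ψ(x)]. -/
open Metric

/-- The `c`-transform of an extended-real-valued function, for the cost
`c(x,y) = d(x,y)²/2`. -/
noncomputable def cTransform {X : Type*} [MetricSpace X] (f : X → EReal) : X → EReal :=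
  fun y => ⨅ x, (((dist x y) ^ 2 / 2 : ℝ) : EReal) - f x

/-- For a closed nonempty subset `E` of a complete separable geodesic space `X`, the function
`ψ = d(·,E)²/2` is `c`-concave: `ψ^{cc} = ψ`. -/
theorem distSq_half_cConcave {X : Type*} [MetricSpace X] [CompleteSpace X]
    [TopologicalSpace.SeparableSpace X]
    (hgeo : ∀ x y : X, ∃ γ : ℝ → X, γ 0 = x ∧ γ 1 = y ∧
      ∀ s ∈ Set.Icc (0:ℝ) 1, ∀ t ∈ Set.Icc (0:ℝ) 1,
        dist (γ s) (γ t) = |s - t| * dist x y)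
    (E : Set X) (hE : IsClosed E) (hEne : E.Nonempty) :
    cTransform (cTransform (fun x => ((infDist x E ^ 2 / 2 : ℝ) : EReal)))
      = fun x => ((infDist x E ^ 2 / 2 : ℝ) : EReal) := by
  set ψ : X → EReal := fun x => ((infDist x E ^ 2 / 2 : ℝ) : EReal) with hψ
  funext x
  apply le_antisymm
  · -- ψ^{cc}(x) ≤ ψ(x): test against points of E, where ψ^c ≥ 0
    rw [← EReal.le_of_forall_lt_iff_le]
    intro r hr0
    have hr : infDist x E ^ 2 / 2 < r := by
      have : ψ x = ((infDist x E ^ 2 / 2 : ℝ) : EReal) := by rw [hψ]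
      rw [this] at hr0; exact_mod_cast hr0
    have hφ : (0:ℝ) ≤ infDist x E := infDist_nonneg
    have hrpos : (0:ℝ) < r := lt_of_le_of_lt (by positivity) hr
    have hlt : infDist x E < Real.sqrt (2 * r) := by
      nlinarith [Real.sq_sqrt (by linarith : (0:ℝ) ≤ 2 * r),
        Real.sqrt_nonneg (2 * r)]
    obtain ⟨p, hpE, hpd⟩ := (infDist_lt_iff hEne).1 hlt
    have hψcp : (0 : EReal) ≤ cTransform ψ p := by
      refine le_iInf fun z => ?_
      have h1 : infDist z E ≤ dist z p := infDist_le_dist_of_mem hpE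
      have h2 : (0:ℝ) ≤ dist z p ^ 2 / 2 - infDist z E ^ 2 / 2 := by
        nlinarith [infDist_nonneg (x := z) (s := E)]
      calc (0 : EReal) ≤ ((dist z p ^ 2 / 2 - infDist z E ^ 2 / 2 : ℝ) : EReal) := by
            exact_mod_cast h2
        _ = ((dist z p ^ 2 / 2 : ℝ) : EReal) - ψ z := by
            have : ψ z = ((infDist z E ^ 2 / 2 : ℝ) : EReal) := by rw [hψ]
            rw [this, ← EReal.coe_sub]
    calc cTransform (cTransform ψ) x ≤ ((dist p x ^ 2 / 2 : ℝ) : EReal) - cTransform ψ p :=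
          iInf_le _ p
      _ ≤ ((dist p x ^ 2 / 2 : ℝ) : EReal) - 0 := EReal.sub_le_sub le_rfl hψcp
      _ = ((dist p x ^ 2 / 2 : ℝ) : EReal) := by rw [sub_zero]
      _ ≤ (r : EReal) := by
          have : dist p x ^ 2 / 2 < r := by
            rw [dist_comm] at hpd
            nlinarith [dist_nonneg (x := p) (y := x),
              Real.sq_sqrt (by linarith : (0:ℝ) ≤ 2 * r)]
          exact_mod_cast this.le
  · -- ψ(x) ≤ ψ^{cc}(x)
    refine le_iInf fun y => ?_
    have h1 : cTransform ψ y ≤ ((dist x y ^ 2 / 2 : ℝ) : EReal) - ψ x := iInf_le _ x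
    have h2 : ((dist x y ^ 2 / 2 : ℝ) : EReal) - ψ x
        = ((dist x y ^ 2 / 2 - infDist x E ^ 2 / 2 : ℝ) : EReal) := by
      have : ψ x = ((infDist x E ^ 2 / 2 : ℝ) : EReal) := by rw [hψ]
      rw [this, ← EReal.coe_sub]
    calc ψ x = ((dist x y ^ 2 / 2 : ℝ) : EReal)
          - ((dist x y ^ 2 / 2 - infDist x E ^ 2 / 2 : ℝ) : EReal) := by
          have hx : ψ x = ((infDist x E ^ 2 / 2 : ℝ) : EReal) := by rw [hψ]
          rw [hx, ← EReal.coe_sub]; norm_num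
      _ ≤ ((dist x y ^ 2 / 2 : ℝ) : EReal) - cTransform ψ y := by
          apply EReal.sub_le_sub le_rfl; rw [← h2]; exact h1
      _ = ((dist y x ^ 2 / 2 : ℝ) : EReal) - cTransform ψ y := by rw [dist_comm]
end

section
/- Let X be a geodesic space, E closed, φ(x)=d(x,E), and a + α' < φ(x) < b − α' with r₀ as above. Then for x₁, x₂ ∈ B(x, r₀), the arc-length distance d^{α'}(x₁,x₂) — the infimum of lengths of curves connecting x₁ to x₂ within φ⁻¹((a+α', b−α')) — equals d(x₁, x₂). -/
open Metric

/-- Lemma 3.18 of the paper (arc-length distance part): under the same assumptions,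
the arc-length distance inside `φ⁻¹((a + α', b - α'))` between two points of `B(x, r₀)`
equals the ambient distance, where `φ = d(·, E)`. -/
theorem arcLength_dist_eq_dist {X : Type*} [MetricSpace X]
    (hgeo : ∀ x y : X, ∃ γ : ℝ → X, γ 0 = x ∧ γ 1 = y ∧
      ∀ s ∈ Set.Icc (0:ℝ) 1, ∀ t ∈ Set.Icc (0:ℝ) 1,
        dist (γ s) (γ t) = |s - t| * dist x y)
    (E : Set X) (hE : IsClosed E) (hEne : E.Nonempty)
    (a b α' : ℝ) (ha : 0 < a) (hab : a < b) (hα'0 : 0 ≤ α') (hα' : α' < (b - a) / 2)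
    (x : X) (hx1 : a + α' < infDist x E) (hx2 : infDist x E < b - α')
    (r₀ : ℝ) (hr₀ : 0 < r₀)
    (hr₀' : r₀ < (1/2) * min (infDist x E - a - α') (b - α' - infDist x E))
    (x₁ x₂ : X) (hx₁ : x₁ ∈ ball x r₀) (hx₂ : x₂ ∈ ball x r₀) :
    (⨅ γ ∈ {γ : ℝ → X | ContinuousOn γ (Set.Icc 0 1) ∧ γ 0 = x₁ ∧ γ 1 = x₂ ∧
        ∀ t ∈ Set.Icc (0:ℝ) 1, infDist (γ t) E ∈ Set.Ioo (a + α') (b - α')},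
      eVariationOn γ (Set.Icc 0 1)) = ENNReal.ofReal (dist x₁ x₂) := by
  obtain ⟨γ, hγ0, hγ1, hγd⟩ := hgeo x₁ x₂
  have hlip : LipschitzOnWith (Real.toNNReal (dist x₁ x₂)) γ (Set.Icc 0 1) := by
    intro s hs t ht
    rw [edist_dist, edist_dist, hγd s hs t ht, Real.dist_eq,
      ENNReal.ofReal_mul (abs_nonneg _), mul_comm]
    rfl
  have hd2 : dist x₁ x₂ < 2 * r₀ := by
    have := dist_triangle x₁ x x₂
    rw [mem_ball] at hx₁ hx₂
    rw [dist_comm x₂ x] at hx₂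
    linarith
  -- every point of the geodesic is within 2 r₀ of x
  have hclose : ∀ t ∈ Set.Icc (0:ℝ) 1, dist (γ t) x < 2 * r₀ := by
    intro t ht
    have h01 : (0:ℝ) ∈ Set.Icc (0:ℝ) 1 := ⟨le_refl 0, zero_le_one⟩
    have h11 : (1:ℝ) ∈ Set.Icc (0:ℝ) 1 := ⟨zero_le_one, le_refl 1⟩
    have h0 : dist (γ t) x₁ = |t - 0| * dist x₁ x₂ := hγ0 ▸ hγd t ht 0 h01
    have h1 : dist (γ t) x₂ = |t - 1| * dist x₁ x₂ := hγ1 ▸ hγd t ht 1 h11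
    rcases le_or_gt t (1/2) with hhalf | hhalf
    · have : dist (γ t) x ≤ dist (γ t) x₁ + dist x₁ x := dist_triangle _ _ _
      rw [mem_ball] at hx₁
      have habs : |t - 0| ≤ 1/2 := by rw [abs_of_nonneg (by linarith [ht.1])]; linarith
      have : dist (γ t) x₁ ≤ (1/2) * dist x₁ x₂ := by
        rw [h0]; exact mul_le_mul_of_nonneg_right habs dist_nonneg
      linarith [dist_triangle (γ t) x₁ x, (mem_ball.mp hx₁)]
    · rw [mem_ball] at hx₂
      have habs : |t - 1| ≤ 1/2 := by
        rw [abs_of_nonpos (by linarith [ht.2])]; linarith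
      have : dist (γ t) x₂ ≤ (1/2) * dist x₁ x₂ := by
        rw [h1]; exact mul_le_mul_of_nonneg_right habs dist_nonneg
      linarith [dist_triangle (γ t) x₂ x, (mem_ball.mp hx₂)]
  have hmem : γ ∈ {γ : ℝ → X | ContinuousOn γ (Set.Icc 0 1) ∧ γ 0 = x₁ ∧ γ 1 = x₂ ∧
      ∀ t ∈ Set.Icc (0:ℝ) 1, infDist (γ t) E ∈ Set.Ioo (a + α') (b - α')} := by
    refine ⟨hlip.continuousOn, hγ0, hγ1, ?_⟩
    intro t ht
    have hc := hclose t ht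
    have h1 : infDist (γ t) E ≤ infDist x E + dist (γ t) x := infDist_le_infDist_add_dist
    have h2 : infDist x E ≤ infDist (γ t) E + dist x (γ t) := infDist_le_infDist_add_dist
    rw [dist_comm] at h2
    have hmin1 := min_le_left (infDist x E - a - α') (b - α' - infDist x E)
    have hmin2 := min_le_right (infDist x E - a - α') (b - α' - infDist x E)
    constructor <;> [skip; skip] <;> nlinarith
  refine le_antisymm ?_ ?_
  · -- inf ≤ eVariationOn γ ≤ ofReal (dist x₁ x₂)
    refine le_trans (iInf₂_le γ hmem) ?_
    have hcomp : eVariationOn (γ ∘ id) (Set.Icc 0 1) ≤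
        (Real.toNNReal (dist x₁ x₂)) * eVariationOn (id : ℝ → ℝ) (Set.Icc 0 1) :=
      hlip.comp_eVariationOn_le (Set.mapsTo_id _)
    have hid : eVariationOn (id : ℝ → ℝ) (Set.Icc 0 1) ≤ ENNReal.ofReal 1 := by
      have hmono : MonotoneOn (id : ℝ → ℝ) (Set.Icc 0 1) := fun _ _ _ _ h => h
      have := hmono.eVariationOn_le (a := 0) (b := 1)
        ⟨le_refl 0, zero_le_one⟩ ⟨zero_le_one, le_refl 1⟩
      simpa using this
    calc eVariationOn γ (Set.Icc 0 1) = eVariationOn (γ ∘ id) (Set.Icc 0 1) := rfl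
      _ ≤ (Real.toNNReal (dist x₁ x₂)) * eVariationOn (id : ℝ → ℝ) (Set.Icc 0 1) := hcomp
      _ ≤ (Real.toNNReal (dist x₁ x₂)) * ENNReal.ofReal 1 := by
          exact mul_le_mul_right hid _
      _ = ENNReal.ofReal (dist x₁ x₂) := by
          rw [ENNReal.ofReal_one, mul_one, ENNReal.ofReal, Real.toNNReal]
  · -- lower bound
    refine le_iInf₂ fun γ' hγ' => ?_
    obtain ⟨_, h0, h1, _⟩ := hγ'
    have := eVariationOn.edist_le γ' (s := Set.Icc (0:ℝ) 1)
      (x := (0:ℝ)) (y := (1:ℝ)) ⟨le_refl 0, zero_le_one⟩ ⟨zero_le_one, le_refl 1⟩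
    rw [h0, h1, edist_dist] at this
    exact this
end

section
/- Let f: (0,∞) → [0,∞) be a nonnegative nondecreasing function that does not vanish identically, and suppose there are d, K > 0 with f(r) ≤ K(r^d + 1) for all r > 0. Then for every Ω > 1 and every C > Ω^d, there exist infinitely many positive integers m such that f(Ω^{m+1}) ≤ C·f(Ω^m). -/
/-- Lemma 3.1 of Colding–Minicozzi (special case): a nonnegative nondecreasing function on
`(0,∞)` of polynomial growth `f(r) ≤ K(r^d + 1)` which is not identically zero satisfies
`f(Ω^{m+1}) ≤ C f(Ω^m)` for infinitely many integers `m`, for any `Ω > 1` and `C > Ω^d`. -/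
theorem poly_growth_doubling_infinitely_often (f : ℝ → ℝ) (d K : ℝ)
    (hd : 0 < d) (hK : 0 < K)
    (hnonneg : ∀ r : ℝ, 0 < r → 0 ≤ f r)
    (hmono : MonotoneOn f (Set.Ioi (0:ℝ)))
    (hnz : ∃ r : ℝ, 0 < r ∧ f r ≠ 0)
    (hgrowth : ∀ r : ℝ, 0 < r → f r ≤ K * (r ^ d + 1)) :
    ∀ Ω : ℝ, 1 < Ω → ∀ C : ℝ, Ω ^ d < C →
      {m : ℕ | f (Ω ^ (m + 1)) ≤ C * f (Ω ^ m)}.Infinite := by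
  intro Ω hΩ C hC
  obtain ⟨r0, hr0, hfr0⟩ := hnz
  have hfr0' : 0 < f r0 := lt_of_le_of_ne (hnonneg r0 hr0) (Ne.symm hfr0)
  have hΩ0 : (0:ℝ) < Ω := lt_trans one_pos hΩ
  have hΩd1 : 1 < Ω ^ d := Real.one_lt_rpow_iff_of_pos hΩ0 |>.2 (Or.inl ⟨hΩ, hd⟩)
  have hΩd0 : (0:ℝ) < Ω ^ d := lt_trans one_pos hΩd1
  have hC1 : 1 < C := lt_trans hΩd1 hC
  have hC0 : (0:ℝ) < C := lt_trans one_pos hC1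
  have hpowpos : ∀ m : ℕ, (0:ℝ) < Ω ^ m := fun m => pow_pos hΩ0 m
  -- key identity : (Ω ^ m) ^ d = (Ω ^ d) ^ m
  have hkey : ∀ m : ℕ, (Ω ^ m : ℝ) ^ d = (Ω ^ d) ^ m := by
    intro m
    rw [← Real.rpow_natCast Ω m, ← Real.rpow_natCast (Ω ^ d) m,
      ← Real.rpow_mul hΩ0.le, ← Real.rpow_mul hΩ0.le, mul_comm]
  by_contra hfin
  rw [Set.not_infinite] at hfin
  obtain ⟨a, ha⟩ := hfin.bddAbove
  obtain ⟨n, hn⟩ := pow_unbounded_of_one_lt r0 hΩ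
  set N : ℕ := max n (a + 1) with hN
  have hr0N : r0 ≤ Ω ^ N := le_trans hn.le (pow_le_pow_right₀ hΩ.le (le_max_left _ _))
  have hfN : 0 < f (Ω ^ N) :=
    lt_of_lt_of_le hfr0' (hmono hr0 (hpowpos N) hr0N)
  have hgt : ∀ m : ℕ, N ≤ m → C * f (Ω ^ m) < f (Ω ^ (m + 1)) := by
    intro m hm
    have : m ∉ {m : ℕ | f (Ω ^ (m + 1)) ≤ C * f (Ω ^ m)} := by
      intro hmem
      have := ha hmem
      omega
    simpa [Set.mem_setOf_eq, not_le] using this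
  have hind : ∀ k : ℕ, C ^ k * f (Ω ^ N) ≤ f (Ω ^ (N + k)) := by
    intro k
    induction k with
    | zero => simp
    | succ k ih =>
      have h1 : C * (C ^ k * f (Ω ^ N)) ≤ C * f (Ω ^ (N + k)) :=
        mul_le_mul_of_nonneg_left ih hC0.le
      have h2 : C * f (Ω ^ (N + k)) < f (Ω ^ (N + k + 1)) :=
        hgt (N + k) (Nat.le_add_right _ _)
      calc C ^ (k + 1) * f (Ω ^ N) = C * (C ^ k * f (Ω ^ N)) := by ring
        _ ≤ C * f (Ω ^ (N + k)) := h1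
        _ ≤ f (Ω ^ (N + k + 1)) := h2.le
        _ = f (Ω ^ (N + (k + 1))) := by ring_nf
  -- upper bound
  have hup : ∀ k : ℕ, C ^ k * f (Ω ^ N) ≤ (2 * K * (Ω ^ d) ^ N) * (Ω ^ d) ^ k := by
    intro k
    have h1 := hgrowth (Ω ^ (N + k)) (hpowpos (N + k))
    have h2 : ((Ω:ℝ) ^ (N + k)) ^ d = (Ω ^ d) ^ N * (Ω ^ d) ^ k := by
      rw [hkey, pow_add]
    have h3 : (1:ℝ) ≤ (Ω ^ d) ^ N * (Ω ^ d) ^ k := by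
      have := one_le_pow₀ (a := Ω ^ d) hΩd1.le (n := N + k)
      rwa [pow_add] at this
    calc C ^ k * f (Ω ^ N) ≤ f (Ω ^ (N + k)) := hind k
      _ ≤ K * (((Ω:ℝ) ^ (N + k)) ^ d + 1) := h1
      _ ≤ K * ((Ω ^ d) ^ N * (Ω ^ d) ^ k + (Ω ^ d) ^ N * (Ω ^ d) ^ k) := by
          rw [h2]; exact mul_le_mul_of_nonneg_left (by linarith) hK.le
      _ = (2 * K * (Ω ^ d) ^ N) * (Ω ^ d) ^ k := by ring
  -- derive contradiction
  have hratio : 1 < C / Ω ^ d := (one_lt_div hΩd0).2 hC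
  obtain ⟨k, hk⟩ := pow_unbounded_of_one_lt (2 * K * (Ω ^ d) ^ N / f (Ω ^ N)) hratio
  have hup' : (C / Ω ^ d) ^ k ≤ 2 * K * (Ω ^ d) ^ N / f (Ω ^ N) := by
    rw [div_pow, div_le_div_iff₀ (pow_pos hΩd0 k) hfN]
    exact hup k
  linarith
end

section
/- Let h: (a,b) → (0,∞) and N > 1. Suppose for all σ₋ < s ≤ t < σ₊ with (σ₋, σ₊) ⊆ (a,b) one has ((σ₊−t)/(σ₊−s))^{N−1} ≤ h(t)/h(s) ≤ ((t−σ₋)/(s−σ₋))^{N−1}. Then h is locally Lipschitz on (a,b). -/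
set_option maxHeartbeats 1000000

private lemma lemA {p r : ℝ} (hp : 0 < p) (hr0 : 0 ≤ r) (hr1 : r ≤ 1) :
    (1 + r) ^ p ≤ 1 + p * Real.exp p * r := by
  have h1 : (0:ℝ) < 1 + r := by linarith
  rw [Real.rpow_def_of_pos h1]
  have hlog : Real.log (1 + r) ≤ r := by
    have := Real.log_le_sub_one_of_pos h1; linarith
  rw [mul_comm]
  have h3 : Real.exp (p * Real.log (1+r)) ≤ Real.exp (p * r) :=
    Real.exp_le_exp.2 (by nlinarith)
  have ha := Real.add_one_le_exp (-(p*r))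
  have hb : Real.exp (-(p*r)) * Real.exp (p*r) = 1 := by
    rw [← Real.exp_add]; simp
  have hc : Real.exp (p*r) - 1 ≤ p*r * Real.exp (p*r) := by
    nlinarith [Real.exp_pos (p*r), mul_le_mul_of_nonneg_right ha (Real.exp_pos (p*r)).le]
  have hd : Real.exp (p*r) ≤ Real.exp p := Real.exp_le_exp.2 (by nlinarith)
  nlinarith [Real.exp_pos (p*r), mul_nonneg (mul_nonneg hp.le hr0) (Real.exp_pos (p*r)).le]

private lemma lemB {p r : ℝ} (hp : 0 < p) (hr0 : 0 ≤ r) (hr1 : r ≤ 2/3) :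
    1 - 3 * p * r ≤ (1 - r) ^ p := by
  have h1 : (0:ℝ) < 1 - r := by linarith
  rw [Real.rpow_def_of_pos h1]
  have h4 : (1-r)⁻¹ ≤ 1 + 3*r := by
    rw [inv_eq_one_div, div_le_iff₀ h1]; nlinarith
  have h3 := Real.log_le_sub_one_of_pos (inv_pos.2 h1)
  rw [Real.log_inv] at h3
  have hlog : -(3*r) ≤ Real.log (1 - r) := by linarith
  have he := Real.add_one_le_exp (-(3*p*r))
  have hmono : Real.exp (-(3*p*r)) ≤ Real.exp (Real.log (1-r) * p) := by
    apply Real.exp_le_exp.2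
    have := mul_le_mul_of_nonneg_left hlog hp.le
    nlinarith
  linarith

/-- A positive function on `(a,b)` satisfying the two-sided density ratio bounds
`((σ₊-t)/(σ₊-s))^{N-1} ≤ h(t)/h(s) ≤ ((t-σ₋)/(s-σ₋))^{N-1}` is locally Lipschitz on `(a,b)`. -/
theorem density_ratio_locally_lipschitz (a b N : ℝ) (hab : a < b) (hN : 1 < N)
    (h : ℝ → ℝ) (hpos : ∀ x ∈ Set.Ioo a b, 0 < h x)
    (hratio : ∀ σm σp s t : ℝ, a ≤ σm → σp ≤ b → σm < s → s ≤ t → t < σp →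
      ((σp - t) / (σp - s)) ^ (N - 1) ≤ h t / h s ∧
      h t / h s ≤ ((t - σm) / (s - σm)) ^ (N - 1)) :
    ∀ x ∈ Set.Ioo a b, ∃ ε > (0:ℝ), Metric.ball x ε ⊆ Set.Ioo a b ∧
      ∃ K : NNReal, LipschitzOnWith K h (Metric.ball x ε) := by
  intro x hx
  obtain ⟨hax, hxb⟩ := hx
  set ε := min (x - a) (b - x) / 4 with hεdef
  have hε0 : 0 < ε := by
    have h1 : 0 < min (x-a) (b-x) := lt_min (by linarith) (by linarith)
    rw [hεdef]; linarith
  have h4a : 4 * ε ≤ x - a := by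
    have := min_le_left (x-a) (b-x); rw [hεdef]; linarith
  have h4b : 4 * ε ≤ b - x := by
    have := min_le_right (x-a) (b-x); rw [hεdef]; linarith
  have hball : ∀ y ∈ Metric.ball x ε, 3*ε < y - a ∧ 3*ε < b - y := by
    intro y hy
    rw [Metric.mem_ball, Real.dist_eq, abs_lt] at hy
    constructor <;> linarith [hy.1, hy.2]
  refine ⟨ε, hε0, ?_, ?_⟩
  · intro y hy
    obtain ⟨h1, h2⟩ := hball y hy
    exact ⟨by linarith, by linarith⟩
  set p := N - 1 with hpdef
  have hp0 : 0 < p := by rw [hpdef]; linarith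
  have hhx : 0 < h x := hpos x ⟨hax, hxb⟩
  have hbab : (0:ℝ) < b - a := by linarith
  set Q : ℝ := ((b-a)/(3*ε)) ^ p with hQdef
  have hQ1 : (1:ℝ) ≤ Q := by
    rw [hQdef]
    calc (1:ℝ) = 1 ^ p := (Real.one_rpow p).symm
    _ ≤ ((b-a)/(3*ε)) ^ p := by
        apply Real.rpow_le_rpow zero_le_one _ hp0.le
        rw [le_div_iff₀ (by linarith)]; linarith
  set M := h x * Q with hMdef
  have hM0 : 0 < M := by nlinarith
  have hMbound : ∀ s ∈ Metric.ball x ε, h s ≤ M := by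
    intro s hs
    obtain ⟨hsa, hsb⟩ := hball s hs
    have hsI : s ∈ Set.Ioo a b := ⟨by linarith, by linarith⟩
    have hps := hpos s hsI
    rcases lt_trichotomy s x with hsx | hsx | hsx
    · have hr := (hratio a b s x le_rfl le_rfl (by linarith) hsx.le (by linarith)).1
      have hq0 : (0:ℝ) < 3*ε/(b-a) := div_pos (by linarith) hbab
      have hqp : 0 < (3*ε/(b-a)) ^ p := Real.rpow_pos_of_pos hq0 p
      have hstep : (3*ε/(b-a)) ^ p ≤ h x / h s := by
        refine le_trans (Real.rpow_le_rpow hq0.le ?_ hp0.le) hr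
        rw [div_le_div_iff₀ (by linarith) (by linarith)]
        nlinarith
      have hinv : Q = ((3*ε/(b-a)) ^ p)⁻¹ := by
        rw [hQdef, ← Real.inv_rpow hq0.le, inv_div]
      have h5 : (3*ε/(b-a)) ^ p * h s ≤ h x := (le_div_iff₀ hps).1 hstep
      rw [hMdef, hinv]
      calc h s = ((3*ε/(b-a)) ^ p * h s) * ((3*ε/(b-a)) ^ p)⁻¹ := by
            field_simp
      _ ≤ h x * ((3*ε/(b-a)) ^ p)⁻¹ := by
            apply mul_le_mul_of_nonneg_right h5 (inv_nonneg.2 hqp.le)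
    · rw [hsx, hMdef]; nlinarith
    · have hr := (hratio a b x s le_rfl le_rfl hax hsx.le (by linarith)).2
      have hstep : h s / h x ≤ Q := by
        refine hr.trans ?_
        rw [hQdef]
        apply Real.rpow_le_rpow (div_nonneg (by linarith) (by linarith)) _ hp0.le
        rw [div_le_div_iff₀ (by linarith) (by linarith)]
        nlinarith
      rw [hMdef]
      calc h s = h s / h x * h x := by field_simp
      _ ≤ Q * h x := mul_le_mul_of_nonneg_right hstep hhx.le
      _ = h x * Q := mul_comm _ _
  set C := 3 * p * Real.exp p with hCdef
  have hC0 : 0 < C := mul_pos (by linarith) (Real.exp_pos p)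
  set L := M * C / (3*ε) with hLdef
  have hL0 : 0 ≤ L := le_of_lt (div_pos (mul_pos hM0 hC0) (by linarith))
  have key : ∀ s ∈ Metric.ball x ε, ∀ t ∈ Metric.ball x ε, s ≤ t →
      |h t - h s| ≤ L * (t - s) := by
    intro s hs t ht hst
    obtain ⟨hsa, hsb⟩ := hball s hs
    obtain ⟨hta, htb⟩ := hball t ht
    have hsI : s ∈ Set.Ioo a b := ⟨by linarith, by linarith⟩
    have htI : t ∈ Set.Ioo a b := ⟨by linarith, by linarith⟩
    have hps := hpos s hsI
    have hpt := hpos t htI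
    have hts2 : t - s < 2*ε := by
      rw [Metric.mem_ball, Real.dist_eq, abs_lt] at hs ht
      linarith [hs.1, hs.2, ht.1, ht.2]
    set r := (t - s)/(3*ε) with hrdef
    have hr0 : 0 ≤ r := div_nonneg (by linarith) (by linarith)
    have hr23 : r ≤ 2/3 := by
      rw [hrdef, div_le_iff₀ (by linarith)]; linarith
    have hr3 : r * (3*ε) = t - s := by
      rw [hrdef]; field_simp
    have hrat := hratio a b s t le_rfl le_rfl (by linarith) hst (by linarith)
    -- upper bound
    have hub : h t / h s ≤ 1 + C * r := by
      refine (hrat.2.trans ?_)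
      have h6 : (t-a)/(s-a) ≤ 1 + r := by
        rw [div_le_iff₀ (by linarith)]
        nlinarith [mul_nonneg hr0 (by linarith : (0:ℝ) ≤ s - a - 3*ε)]
      calc ((t-a)/(s-a)) ^ p ≤ (1+r) ^ p := by
            apply Real.rpow_le_rpow (div_nonneg (by linarith) (by linarith)) h6 hp0.le
      _ ≤ 1 + p * Real.exp p * r := lemA hp0 hr0 (by linarith)
      _ ≤ 1 + C * r := by
            rw [hCdef]
            nlinarith [mul_nonneg (mul_nonneg hp0.le (Real.exp_pos p).le) hr0]
    -- lower bound
    have hlb : 1 - C * r ≤ h t / h s := by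
      have h7 : 1 - r ≤ (b-t)/(b-s) := by
        rw [le_div_iff₀ (by linarith)]
        nlinarith [mul_nonneg hr0 (by linarith : (0:ℝ) ≤ b - s - 3*ε)]
      have h8 : (1 - r) ^ p ≤ ((b-t)/(b-s)) ^ p :=
        Real.rpow_le_rpow (by linarith) h7 hp0.le
      have h9 := lemB hp0 hr0 hr23
      have h10 : 1 - C * r ≤ 1 - 3*p*r := by
        rw [hCdef]
        nlinarith [Real.one_le_exp hp0.le, mul_nonneg hp0.le hr0]
      linarith [hrat.1]
    have hsM := hMbound s hs
    have hup : h t - h s ≤ M * C * r := by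
      have := (div_le_iff₀ hps).1 hub
      nlinarith [mul_nonneg hC0.le hr0]
    have hdown : h s - h t ≤ M * C * r := by
      have := (le_div_iff₀ hps).1 hlb
      nlinarith [mul_nonneg hC0.le hr0]
    have heq : M * C * r = L * (t - s) := by
      rw [hLdef, hrdef]; field_simp; try ring
    rw [← heq]
    exact abs_le.2 ⟨by linarith, by linarith⟩
  refine ⟨L.toNNReal, LipschitzOnWith.of_dist_le_mul ?_⟩
  intro y hy z hz
  rw [Real.dist_eq, Real.dist_eq, Real.coe_toNNReal _ hL0]
  rcases le_total y z with hyz | hzy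
  · have hk := key y hy z hz hyz
    have habs : |y - z| = z - y := by
      rw [abs_sub_comm]; exact abs_of_nonneg (by linarith)
    rw [habs, abs_sub_comm]
    exact hk
  · have hk := key z hz y hy hzy
    have habs : |y - z| = y - z := abs_of_nonneg (by linarith)
    rw [habs]
    exact hk
end
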